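/- The image of Ω = (0,1) × (−∞,−1) under Ψ(x,y) = (1/(x−y), −xy/(x−y)) equals exactly the open triangle Γ = {(u,v) : u > 0, v > 0, u + v < 1}. -/

import Mathlib

noncomputable section

open Real

/-- The Gauss map `T x = 1/x - ⌊1/x⌋`. -/
def gauss (x : ℝ) : ℝ := 1 / x - ⌊1 / x⌋

/-- The future of `x₀` at time `n`: `xₙ = Tⁿ x₀`. -/
def fut (x₀ : ℝ) (n : ℕ) : ℝ := gauss^[n] x₀

/-- The `n`-th partial quotient (digit) of `x₀` (meaningful for `n ≥ 1`):
`aₙ = ⌊1/xₙ₋₁⌋`. -/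
def digit (x₀ : ℝ) (n : ℕ) : ℤ := ⌊1 / fut x₀ (n - 1)⌋

/-- Numerators of the continued fraction convergents of `x₀ ∈ (0,1)`. -/
def num (x₀ : ℝ) : ℕ → ℤ
  | 0 => 0
  | 1 => 1
  | (n + 2) => digit x₀ (n + 2) * num x₀ (n + 1) + num x₀ n

/-- Denominators of the continued fraction convergents of `x₀ ∈ (0,1)`. -/
def den (x₀ : ℝ) : ℕ → ℤ
  | 0 => 1
  | 1 => digit x₀ 1
  | (n + 2) => digit x₀ (n + 2) * den x₀ (n + 1) + den x₀ n

/-- The `n`-th approximation coefficient `θₙ = qₙ² |x₀ - pₙ/qₙ|`. -/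
def theta (x₀ : ℝ) (n : ℕ) : ℝ :=
  (den x₀ n : ℝ) ^ 2 * |x₀ - (num x₀ n : ℝ) / (den x₀ n : ℝ)|

/-- Finite continued fraction `[b₁,...,bₖ] = 1/(b₁ + 1/(⋯ + 1/bₖ))`, with `[∅] = 0`. -/
def fcf : List ℝ → ℝ
  | [] => 0
  | (b :: bs) => 1 / (b + fcf bs)

/-- The past of `x₀` at time `n ≥ 1`: `yₙ = -aₙ - [aₙ₋₁, aₙ₋₂, ..., a₁]`. -/
def past (x₀ : ℝ) (n : ℕ) : ℝ :=
  -(digit x₀ n : ℝ) -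
    fcf (((List.range (n - 1)).map fun i => ((digit x₀ (n - 1 - i) : ℤ) : ℝ)))

/-- The domain `Ω = (0,1) × (-∞,-1)`. -/
def Omega : Set (ℝ × ℝ) := Set.Ioo (0 : ℝ) 1 ×ˢ Set.Iio (-1 : ℝ)

/-- The open triangle `Γ` with vertices `(0,0)`, `(1,0)`, `(0,1)`. -/
def Gam : Set (ℝ × ℝ) := {p | 0 < p.1 ∧ 0 < p.2 ∧ p.1 + p.2 < 1}

/-- The map `Ψ(x,y) = (1/(x-y), -xy/(x-y))`. -/
def Psi (p : ℝ × ℝ) : ℝ × ℝ := (1 / (p.1 - p.2), -(p.1 * p.2) / (p.1 - p.2))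

/-- The map `Φ(u,v) = ((1-√(1-4uv))/(2u), -(1+√(1-4uv))/(2u))`. -/
def Phi (p : ℝ × ℝ) : ℝ × ℝ :=
  ((1 - Real.sqrt (1 - 4 * p.1 * p.2)) / (2 * p.1),
   -((1 + Real.sqrt (1 - 4 * p.1 * p.2)) / (2 * p.1)))

/-- The natural extension map `𝒯(x,y) = (1/x - ⌊1/x⌋, 1/y - ⌊1/x⌋)`. -/
def natExt (p : ℝ × ℝ) : ℝ × ℝ := (1 / p.1 - ⌊1 / p.1⌋, 1 / p.2 - ⌊1 / p.1⌋)

theorem stmt7 : Psi '' Omega = Gam := by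
  ext ⟨u, v⟩
  simp only [Set.mem_image, Omega, Gam, Psi, Set.mem_prod, Set.mem_Ioo, Set.mem_Iio,
    Set.mem_setOf_eq, Prod.exists, Prod.mk.injEq]
  constructor
  · rintro ⟨x, y, ⟨⟨hx0, hx1⟩, hy⟩, hu, hv⟩
    have hxy : 0 < x - y := by linarith
    refine ⟨by rw [← hu]; positivity, ?_, ?_⟩
    · rw [← hv]
      have : 0 < -(x * y) := by nlinarith
      positivity
    · rw [← hu, ← hv, ← add_div, div_lt_one hxy]
      nlinarith
  · rintro ⟨hu, hv, huv⟩
    have h4 : 0 < 1 - 4 * u * v := by nlinarith [sq_nonneg (u - v), sq_nonneg (u + v)]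
    set s := Real.sqrt (1 - 4 * u * v) with hsdef
    have hs2 : s ^ 2 = 1 - 4 * u * v := Real.sq_sqrt h4.le
    have hspos : 0 < s := Real.sqrt_pos.mpr h4
    have hs1 : s < 1 := by nlinarith
    have h2u : (0:ℝ) < 2 * u := by linarith
    have hkey : 1 - 2 * u < s := by
      by_contra h
      push_neg at h
      nlinarith [mul_pos hu (show (0:ℝ) < 1 - u - v by linarith)]
    have hkey2 : 2 * u - 1 < s := by
      by_contra h
      push_neg at h
      nlinarith [mul_pos hu (show (0:ℝ) < 1 - u - v by linarith)]
    have hA : ((1 - s) / (2 * u)) - (-((1 + s) / (2 * u))) = 1 / u := by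
      field_simp
      ring
    refine ⟨(1 - s) / (2 * u), -((1 + s) / (2 * u)), ⟨⟨?_, ?_⟩, ?_⟩, ?_, ?_⟩
    · apply div_pos (by linarith) h2u
    · rw [div_lt_one h2u]; linarith
    · have : 1 < (1 + s) / (2 * u) := by rw [lt_div_iff₀ h2u]; linarith
      linarith
    · rw [hA, one_div_one_div]
    · rw [hA, one_div, div_inv_eq_mul]
      field_simp
      linear_combination (-1) * hs2
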